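/- Let p be a prime. For any non-empty subset S ⊆ (ℤ/pℤ) \ {0} there exists a multiset T of elements of ℤ/pℤ of cardinality at most p whose elements sum to 0 and whose underlying set of elements (support) is exactly S. -/

import Mathlib

open scoped ENNReal
open scoped Pointwise

/-- Key lemma: the set of sums of at most `j+1` elements of `S` (with repetition) has
cardinality at least `min p ((|S|-1)*j + |S| + 1)`. -/
lemma aux_sums_card {p : ℕ} (hp : p.Prime) {S : Finset (ZMod p)} (hS : S.Nonempty)
    (h0 : (0 : ZMod p) ∉ S) (j : ℕ) :
    ∃ B : Finset (ZMod p), min p ((S.card - 1) * j + S.card + 1) ≤ B.card ∧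
      ∀ x ∈ B, ∃ U : Multiset (ZMod p),
        Multiset.card U ≤ j + 1 ∧ (∀ u ∈ U, u ∈ S) ∧ U.sum = x := by
  induction j with
  | zero =>
    refine ⟨insert 0 S, ?_, ?_⟩
    · rw [Finset.card_insert_of_notMem h0]
      exact min_le_of_right_le (by omega)
    · intro x hx
      rcases Finset.mem_insert.1 hx with h | h
      · exact ⟨0, by simp, by simp, by simp [h]⟩
      · exact ⟨{x}, by simp, by simpa using h, by simp⟩
  | succ j ih =>
    obtain ⟨B, hcard, hmem⟩ := ih
    have hk : 1 ≤ S.card := Finset.card_pos.2 hS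
    have hp2 : 2 ≤ p := hp.two_le
    have hBne : B.Nonempty := by
      rw [← Finset.card_pos]
      refine lt_of_lt_of_le ?_ hcard
      omega
    refine ⟨B ∪ (B + S), ?_, ?_⟩
    · rcases le_or_gt p B.card with h | h
      · exact le_trans (min_le_left _ _)
          (le_trans h (Finset.card_le_card Finset.subset_union_left))
      · have hB : (S.card - 1) * j + S.card + 1 ≤ B.card := by
          rcases min_le_iff.1 (le_refl (min p ((S.card - 1) * j + S.card + 1))) with h' | h'
          · omega
          · omega
        have hcd := ZMod.cauchy_davenport hp hBne hS
        refine le_trans ?_ (le_trans hcd (Finset.card_le_card Finset.subset_union_right))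
        exact min_le_min (le_refl p) (by have h := Nat.mul_succ (S.card - 1) j; simp only [Nat.succ_eq_add_one] at h ⊢; omega)
    · intro x hx
      rcases Finset.mem_union.1 hx with h | h
      · obtain ⟨U, hU1, hU2, hU3⟩ := hmem x h
        exact ⟨U, by omega, hU2, hU3⟩
      · obtain ⟨b, hb, a, ha, rfl⟩ := Finset.mem_add.1 h
        obtain ⟨U, hU1, hU2, hU3⟩ := hmem b hb
        refine ⟨a ::ₘ U, ?_, ?_, ?_⟩
        · simpa using by omega
        · intro u hu
          rcases Multiset.mem_cons.1 hu with rfl | hu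
          · exact ha
          · exact hU2 u hu
        · simp [hU3]; ring

/-- For any non-empty subset `S ⊆ (ℤ/pℤ) \ {0}` there is a zero-sum sequence (multiset) over
`ℤ/pℤ` of length at most `p` with support exactly `S`. -/
theorem exists_zero_sum_multiset_with_support {p : ℕ} (hp : p.Prime)
    (S : Finset (ZMod p)) (hS : S.Nonempty) (h0 : (0 : ZMod p) ∉ S) :
    ∃ T : Multiset (ZMod p), Multiset.card T ≤ p ∧ T.sum = 0 ∧ T.toFinset = S := by
  haveI : Fact p.Prime := ⟨hp⟩
  have hp2 : 2 ≤ p := hp.two_le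
  have hklep : S.card ≤ p - 1 := by
    have : S ⊆ Finset.univ.erase 0 := fun x hx =>
      Finset.mem_erase.2 ⟨fun h => h0 (h ▸ hx), Finset.mem_univ x⟩
    have := Finset.card_le_card this
    rwa [Finset.card_erase_of_mem (Finset.mem_univ _), Finset.card_univ, ZMod.card] at this
  rcases eq_or_lt_of_le (show 1 ≤ S.card from Finset.card_pos.2 hS) with h1 | h2
  · -- |S| = 1
    obtain ⟨a, rfl⟩ := Finset.card_eq_one.1 h1.symm
    refine ⟨Multiset.replicate p a, by simp, ?_, ?_⟩
    · rw [Multiset.sum_replicate, nsmul_eq_mul, ZMod.natCast_self, zero_mul]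
    · rw [Multiset.toFinset_replicate, if_neg (by omega)]
  · -- |S| ≥ 2
    obtain ⟨B, hcard, hmem⟩ := aux_sums_card hp hS h0 (p - S.card - 1)
    have hBuniv : B = Finset.univ := by
      apply Finset.eq_univ_of_card
      rw [ZMod.card]
      refine le_antisymm (by simpa [ZMod.card] using Finset.card_le_univ B) ?_
      refine le_trans ?_ hcard
      have h3 : 1 * (p - S.card - 1) ≤ (S.card - 1) * (p - S.card - 1) :=
        Nat.mul_le_mul_right _ (by omega)
      omega
    obtain ⟨U, hU1, hU2, hU3⟩ := hmem (-(S.val.sum)) (hBuniv ▸ Finset.mem_univ _)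
    refine ⟨S.val + U, ?_, ?_, ?_⟩
    · rw [Multiset.card_add]
      have : (Multiset.card S.val) = S.card := rfl
      omega
    · rw [Multiset.sum_add, hU3, add_neg_cancel]
    · rw [Multiset.toFinset_add, Finset.val_toFinset]
      exact Finset.union_eq_left.2 fun u hu => hU2 u (Multiset.mem_toFinset.1 hu)
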